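/- Let f : ℂ² × ℂ² → ℂ be holomorphic (complex-differentiable) and fix ρ = (ρ₀,ρ₁) ∈ ℂ². Define g on ℂ^{2×2} × ℂ² by g(x,π) = f( (i Σ_{B'} x^{0B'}ρ_{B'} + π⁰, i Σ_{B'} x^{1B'}ρ_{B'} + π¹), ρ ). Then g satisfies the zero rest-mass equation: for each A' ∈ {0,1}, Σ_{A,B∈{0,1}} ε^{AB} ∂²g/(∂π^B ∂x^{AA'}) = 0 identically. (Paper: the differentiation step in the proof of Lemma 6.1, showing that the integrand of the contour integral (6.4) — and hence the twistor contour integral itself — satisfies the zero rest-mass field equations ∂_π^A ∂_a φ(f) = 0.) -/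

import Mathlib

/-!
The differentiation step in the proof of Lemma 6.1: for holomorphic `f` and
fixed `ρ`, the function `g(x,π) = f((i Σ x^{AB'}ρ_{B'} + π^A)_A, ρ)` (the
integrand of the twistor contour integral (6.4)) satisfies the zero rest-mass
equation `Σ_{A,B} ε^{AB} ∂²g/(∂π^B ∂x^{AA'}) = 0` for each `A'`.
-/

/-- Fields on complexified space-time with one spinor argument. -/
abbrev ZrmField : Type :=
  (Fin 2 → Fin 2 → ℂ) → (Fin 2 → ℂ) → ℂ

/-- Complex partial derivative with respect to `x^{AA'}`. -/
noncomputable def dX (A A' : Fin 2) (g : ZrmField) : ZrmField :=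
  fun x π =>
    deriv (fun s : ℂ => g (Function.update x A (Function.update (x A) A' s)) π) (x A A')

/-- Complex partial derivative with respect to `π^B`. -/
noncomputable def dPi (B : Fin 2) (g : ZrmField) : ZrmField :=
  fun x π => deriv (fun s : ℂ => g x (Function.update π B s)) (π B)

/-- The antisymmetric ε-symbol on `{0,1}`: `ε^{01} = 1 = −ε^{10}`. -/
def eps (A B : Fin 2) : ℂ :=
  if A = 0 ∧ B = 1 then 1 else if A = 1 ∧ B = 0 then -1 else 0

/-- The integrand of the twistor contour integral:
`g(x,π) = f((i Σ_{B'} x^{AB'}ρ_{B'} + π^A)_A, ρ)`. -/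
noncomputable def gField (f : (Fin 2 → ℂ) × (Fin 2 → ℂ) → ℂ) (ρ : Fin 2 → ℂ) : ZrmField :=
  fun x π =>
    f ((fun A : Fin 2 => Complex.I * (∑ B' : Fin 2, x A B' * ρ B') + π A), ρ)

open MeasureTheory Metric Set Function intervalIntegral

noncomputable section ZrmAux

/-- The kernel appearing when a circle integral `∮ (z-c)⁻² g z` is written as an
interval integral. -/
def zrmK (θ : ℝ) : ℂ := circleMap 0 1 θ * Complex.I * ((circleMap 0 1 θ) ^ 2)⁻¹

lemma zrmK_cont : Continuous zrmK := by
  refine ((continuous_circleMap 0 1).mul continuous_const).mul ?_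
  exact ((continuous_circleMap 0 1).pow 2).inv₀
    (fun θ => pow_ne_zero _ (circleMap_ne_center one_ne_zero))

lemma zrmK_norm (θ : ℝ) : ‖zrmK θ‖ = 1 := by
  simp [zrmK, norm_mul, norm_circleMap_zero]

/-- Cauchy integral formula for the derivative, in interval-integral form. -/
lemma deriv_eq_int (g : ℂ → ℂ) (hg : Differentiable ℂ g) (c : ℂ) :
    deriv g c = (2 * Real.pi * Complex.I)⁻¹ *
      ∫ θ in (0:ℝ)..2 * Real.pi, zrmK θ * g (circleMap c 1 θ) := by
  have h := (hg.hasFPowerSeriesOnBall c (R := 1) one_pos).hasFPowerSeriesAt.deriv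
  rw [h, cauchyPowerSeries_apply, circleIntegral, smul_eq_mul]
  congr 1
  refine intervalIntegral.integral_congr fun θ _ => ?_
  simp only [smul_eq_mul, deriv_circleMap, NNReal.coe_one, circleMap_sub_center, zrmK]
  ring

/-- Cauchy estimate for the derivative on the unit circle. -/
lemma norm_deriv_le_sphere (g : ℂ → ℂ) (hg : Differentiable ℂ g) (c : ℂ) {M : ℝ}
    (hM : ∀ z ∈ sphere c (1:ℝ), ‖g z‖ ≤ M) : ‖deriv g c‖ ≤ M := by
  have h := (hg.hasFPowerSeriesOnBall c (R := 1) one_pos).hasFPowerSeriesAt.deriv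
  rw [h, cauchyPowerSeries_apply]
  have hb : ‖∮ z in C(c, ((1:NNReal):ℝ)), ((1:ℂ) / (z - c)) ^ 1 • (z - c)⁻¹ • g z‖ ≤
      2 * Real.pi * 1 * M := by
    refine circleIntegral.norm_integral_le_of_norm_le_const (by norm_num) fun z hz => ?_
    have hz1 : ‖z - c‖ = 1 := by
      simpa [dist_eq_norm] using hz
    have hzne : z - c ≠ 0 := by
      intro h0; rw [h0] at hz1; simp at hz1
    have : ‖((1:ℂ) / (z - c)) ^ 1 • (z - c)⁻¹ • g z‖ = ‖g z‖ := by
      simp [norm_smul, norm_inv, hz1]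
    rw [this]
    exact hM z (by simpa using hz)
  have hnorm : ‖((2 * (Real.pi:ℂ) * Complex.I))⁻¹‖ = (2 * Real.pi)⁻¹ := by
    simp [norm_inv, norm_mul, abs_of_pos Real.pi_pos]
  calc ‖(2 * (Real.pi:ℂ) * Complex.I)⁻¹ •
        ∮ z in C(c, ((1:NNReal):ℝ)), ((1:ℂ) / (z - c)) ^ 1 • (z - c)⁻¹ • g z‖
      = (2 * Real.pi)⁻¹ * ‖∮ z in C(c, ((1:NNReal):ℝ)), ((1:ℂ) / (z - c)) ^ 1 • (z - c)⁻¹ • g z‖ := by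
        rw [norm_smul, hnorm]
    _ ≤ (2 * Real.pi)⁻¹ * (2 * Real.pi * 1 * M) := by
        refine mul_le_mul_of_nonneg_left hb (by positivity)
    _ = M := by
        field_simp

/-- Fubini for iterated interval integrals of a jointly continuous function. -/
lemma swap_int (H : ℝ → ℝ → ℂ) (hH : Continuous (Function.uncurry H)) :
    ∫ θ₁ in (0:ℝ)..2 * Real.pi, ∫ θ₂ in (0:ℝ)..2 * Real.pi, H θ₁ θ₂ =
      ∫ θ₂ in (0:ℝ)..2 * Real.pi, ∫ θ₁ in (0:ℝ)..2 * Real.pi, H θ₁ θ₂ := by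
  have h2π : (0:ℝ) ≤ 2 * Real.pi := by positivity
  simp only [intervalIntegral.integral_of_le h2π]
  apply MeasureTheory.integral_integral_swap
  rw [Measure.prod_restrict]
  have hint : IntegrableOn (Function.uncurry H)
      (Icc (0:ℝ) (2 * Real.pi) ×ˢ Icc (0:ℝ) (2 * Real.pi)) (volume.prod volume) := by
    rw [← MeasureTheory.Measure.volume_eq_prod]
    exact hH.continuousOn.integrableOn_compact (isCompact_Icc.prod isCompact_Icc)
  exact hint.mono_set (Set.prod_mono Set.Ioc_subset_Icc_self Set.Ioc_subset_Icc_self)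

/-- Symmetry of mixed complex partial derivatives for a jointly ℂ-differentiable
function on `ℂ × ℂ`. -/
lemma clairaut_cc (F : ℂ × ℂ → ℂ) (hF : Differentiable ℂ F) (a b : ℂ) :
    deriv (fun t => deriv (fun s => F (s, t)) a) b
      = deriv (fun s => deriv (fun t => F (s, t)) b) a := by
  have hs1 : ∀ t, Differentiable ℂ (fun s => F (s, t)) := fun t =>
    hF.comp (differentiable_id.prodMk (differentiable_const t))
  have hs2 : ∀ w, Differentiable ℂ (fun t => F (w, t)) := fun w =>
    hF.comp ((differentiable_const w).prodMk differentiable_id)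
  obtain ⟨M, hM⟩ := ((isCompact_closedBall a 2).prod (isCompact_closedBall b 2))
    |>.exists_bound_of_continuousOn hF.continuous.continuousOn
  set C : ℂ := (2 * Real.pi * Complex.I)⁻¹ with hC
  -- the two "partial derivative" functions
  set d1 : ℂ → ℂ → ℂ := fun t s => deriv (fun σ => F (σ, t)) s with hd1
  set d2 : ℂ → ℂ → ℂ := fun w t => deriv (fun τ => F (w, τ)) t with hd2
  have hrepA : ∀ t s, d1 t s =
      C * ∫ θ in (0:ℝ)..2 * Real.pi, zrmK θ * F (circleMap s 1 θ, t) := fun t s =>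
    deriv_eq_int _ (hs1 t) s
  have hrepB : ∀ w t, d2 w t =
      C * ∫ θ in (0:ℝ)..2 * Real.pi, zrmK θ * F (w, circleMap t 1 θ) := fun w t =>
    deriv_eq_int _ (hs2 w) t
  -- bounds on the partial derivatives
  have hbound2 : ∀ w ∈ closedBall a 2, ∀ t ∈ ball b 1, ‖d2 w t‖ ≤ M := by
    intro w hw t ht
    refine norm_deriv_le_sphere _ (hs2 w) t fun ζ hζ => hM (w, ζ) ?_
    refine Set.mk_mem_prod hw ?_
    have h1 : dist ζ t = 1 := mem_sphere.mp hζ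
    have h2 : dist t b < 1 := mem_ball.mp ht
    have := dist_triangle ζ t b
    exact mem_closedBall.mpr (by linarith)
  have hbound1 : ∀ t ∈ closedBall b 2, ∀ s ∈ ball a 1, ‖d1 t s‖ ≤ M := by
    intro t ht s hs
    refine norm_deriv_le_sphere _ (hs1 t) s fun ζ hζ => hM (ζ, t) ?_
    refine Set.mk_mem_prod ?_ ht
    have h1 : dist ζ s = 1 := mem_sphere.mp hζ
    have h2 : dist s a < 1 := mem_ball.mp hs
    have := dist_triangle ζ s a
    exact mem_closedBall.mpr (by linarith)
  -- continuity of the partial derivatives along the relevant circles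
  have hQ2cont : Continuous fun w => ∫ θ in (0:ℝ)..2 * Real.pi,
      zrmK θ * F (w, circleMap b 1 θ) := by
    apply intervalIntegral.continuous_parametric_intervalIntegral_of_continuous'
    exact (zrmK_cont.comp continuous_snd).mul
      (hF.continuous.comp (continuous_fst.prodMk
        ((continuous_circleMap b 1).comp continuous_snd)))
  have hQ1cont : Continuous fun t => ∫ θ in (0:ℝ)..2 * Real.pi,
      zrmK θ * F (circleMap a 1 θ, t) := by
    apply intervalIntegral.continuous_parametric_intervalIntegral_of_continuous'
    exact (zrmK_cont.comp continuous_snd).mul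
      (hF.continuous.comp ((((continuous_circleMap a 1).comp continuous_snd)).prodMk
        continuous_fst))
  have hd2cont : Continuous fun w => d2 w b := by
    have : (fun w => d2 w b) = fun w => C * ∫ θ in (0:ℝ)..2 * Real.pi,
        zrmK θ * F (w, circleMap b 1 θ) := funext fun w => hrepB w b
    rw [this]; exact continuous_const.mul hQ2cont
  have hd1cont : Continuous fun t => d1 t a := by
    have : (fun t => d1 t a) = fun t => C * ∫ θ in (0:ℝ)..2 * Real.pi,
        zrmK θ * F (circleMap a 1 θ, t) := funext fun t => hrepA t a
    rw [this]; exact continuous_const.mul hQ1cont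
  -- membership facts
  have hzmem : ∀ θ : ℝ, circleMap a 1 θ ∈ closedBall a 2 := fun θ => by
    have := circleMap_mem_sphere a zero_le_one θ
    exact mem_closedBall.mpr (by rw [mem_sphere.mp this]; norm_num)
  have hvmem : ∀ θ : ℝ, circleMap b 1 θ ∈ closedBall b 2 := fun θ => by
    have := circleMap_mem_sphere b zero_le_one θ
    exact mem_closedBall.mpr (by rw [mem_sphere.mp this]; norm_num)
  -- differentiation under the integral sign, for each side
  have keyL : HasDerivAt (fun t => ∫ θ in (0:ℝ)..2 * Real.pi,
      zrmK θ * F (circleMap a 1 θ, t))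
      (∫ θ in (0:ℝ)..2 * Real.pi, zrmK θ * d2 (circleMap a 1 θ) b) b := by
    refine (intervalIntegral.hasDerivAt_integral_of_dominated_loc_of_deriv_le
      (F := fun x θ => zrmK θ * F (circleMap a 1 θ, x))
      (F' := fun x θ => zrmK θ * d2 (circleMap a 1 θ) x)
      (bound := fun _ => M) (ball_mem_nhds _ one_pos) ?_ ?_ ?_ ?_ ?_ ?_).2
    · exact Filter.Eventually.of_forall fun x =>
        ((zrmK_cont.mul (hF.continuous.comp ((continuous_circleMap a 1).prodMk
          continuous_const))).aestronglyMeasurable)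
    · exact (zrmK_cont.mul (hF.continuous.comp ((continuous_circleMap a 1).prodMk
        continuous_const))).intervalIntegrable _ _
    · exact (zrmK_cont.mul (hd2cont.comp (continuous_circleMap a 1))).aestronglyMeasurable
    · refine Filter.Eventually.of_forall fun θ _ => fun x hx => ?_
      rw [norm_mul, zrmK_norm, one_mul]
      exact hbound2 _ (hzmem θ) _ hx
    · exact intervalIntegrable_const
    · refine Filter.Eventually.of_forall fun θ _ => fun x _ => ?_
      exact ((hs2 (circleMap a 1 θ)) x).hasDerivAt.const_mul (zrmK θ)
  have keyR : HasDerivAt (fun s => ∫ θ in (0:ℝ)..2 * Real.pi,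
      zrmK θ * F (s, circleMap b 1 θ))
      (∫ θ in (0:ℝ)..2 * Real.pi, zrmK θ * d1 (circleMap b 1 θ) a) a := by
    refine (intervalIntegral.hasDerivAt_integral_of_dominated_loc_of_deriv_le
      (F := fun x θ => zrmK θ * F (x, circleMap b 1 θ))
      (F' := fun x θ => zrmK θ * d1 (circleMap b 1 θ) x)
      (bound := fun _ => M) (ball_mem_nhds _ one_pos) ?_ ?_ ?_ ?_ ?_ ?_).2
    · exact Filter.Eventually.of_forall fun x =>
        ((zrmK_cont.mul (hF.continuous.comp (continuous_const.prodMk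
          (continuous_circleMap b 1)))).aestronglyMeasurable)
    · exact (zrmK_cont.mul (hF.continuous.comp (continuous_const.prodMk
        (continuous_circleMap b 1)))).intervalIntegrable _ _
    · exact (zrmK_cont.mul (hd1cont.comp (continuous_circleMap b 1))).aestronglyMeasurable
    · refine Filter.Eventually.of_forall fun θ _ => fun x hx => ?_
      rw [norm_mul, zrmK_norm, one_mul]
      exact hbound1 _ (hvmem θ) _ hx
    · exact intervalIntegrable_const
    · refine Filter.Eventually.of_forall fun θ _ => fun x _ => ?_
      exact ((hs1 (circleMap b 1 θ)) x).hasDerivAt.const_mul (zrmK θ)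
  -- compute both sides as a double integral
  have hL : deriv (fun t => deriv (fun s => F (s, t)) a) b
      = C * ∫ θ in (0:ℝ)..2 * Real.pi, zrmK θ * d2 (circleMap a 1 θ) b := by
    have hfun : (fun t => deriv (fun s => F (s, t)) a)
        = fun t => C * ∫ θ in (0:ℝ)..2 * Real.pi, zrmK θ * F (circleMap a 1 θ, t) :=
      funext fun t => hrepA t a
    rw [hfun, deriv_const_mul_field, keyL.deriv]
  have hR : deriv (fun s => deriv (fun t => F (s, t)) b) a
      = C * ∫ θ in (0:ℝ)..2 * Real.pi, zrmK θ * d1 (circleMap b 1 θ) a := by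
    have hfun : (fun s => deriv (fun t => F (s, t)) b)
        = fun s => C * ∫ θ in (0:ℝ)..2 * Real.pi, zrmK θ * F (s, circleMap b 1 θ) :=
      funext fun s => hrepB s b
    rw [hfun, deriv_const_mul_field, keyR.deriv]
  rw [hL, hR]
  congr 1
  calc ∫ θ₁ in (0:ℝ)..2 * Real.pi, zrmK θ₁ * d2 (circleMap a 1 θ₁) b
      = C * ∫ θ₁ in (0:ℝ)..2 * Real.pi, ∫ θ₂ in (0:ℝ)..2 * Real.pi,
          zrmK θ₁ * (zrmK θ₂ * F (circleMap a 1 θ₁, circleMap b 1 θ₂)) := by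
        rw [← intervalIntegral.integral_const_mul]
        refine intervalIntegral.integral_congr fun θ₁ _ => ?_
        have h' : (∫ θ₂ in (0:ℝ)..2 * Real.pi,
            zrmK θ₁ * (zrmK θ₂ * F (circleMap a 1 θ₁, circleMap b 1 θ₂)))
            = zrmK θ₁ * ∫ θ₂ in (0:ℝ)..2 * Real.pi,
              zrmK θ₂ * F (circleMap a 1 θ₁, circleMap b 1 θ₂) :=
          intervalIntegral.integral_const_mul _ _
        rw [hrepB, h']; ring
    _ = C * ∫ θ₂ in (0:ℝ)..2 * Real.pi, ∫ θ₁ in (0:ℝ)..2 * Real.pi,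
          zrmK θ₁ * (zrmK θ₂ * F (circleMap a 1 θ₁, circleMap b 1 θ₂)) := by
        congr 1
        refine swap_int _ ?_
        refine (zrmK_cont.comp continuous_fst).mul ((zrmK_cont.comp continuous_snd).mul
          (hF.continuous.comp ?_))
        exact ((continuous_circleMap a 1).comp continuous_fst).prodMk
          ((continuous_circleMap b 1).comp continuous_snd)
    _ = ∫ θ₂ in (0:ℝ)..2 * Real.pi, zrmK θ₂ * d1 (circleMap b 1 θ₂) a := by
        rw [← intervalIntegral.integral_const_mul]
        refine intervalIntegral.integral_congr fun θ₂ _ => ?_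
        have h' : (∫ θ₁ in (0:ℝ)..2 * Real.pi,
            zrmK θ₁ * (zrmK θ₂ * F (circleMap a 1 θ₁, circleMap b 1 θ₂)))
            = zrmK θ₂ * ∫ θ₁ in (0:ℝ)..2 * Real.pi,
              zrmK θ₁ * F (circleMap a 1 θ₁, circleMap b 1 θ₂) := by
          rw [← intervalIntegral.integral_const_mul]
          exact intervalIntegral.integral_congr fun θ₁ _ => by ring
        rw [h', hrepA]; ring

theorem zrm_gField (f : (Fin 2 → ℂ) × (Fin 2 → ℂ) → ℂ) (hf : Differentiable ℂ f)
    (ρ : Fin 2 → ℂ) :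
    ∀ A' : Fin 2, ∀ x π,
      ∑ A : Fin 2, ∑ B : Fin 2, eps A B * dPi B (dX A A' (gField f ρ)) x π = 0 := by
  intro A' x π
  have hsum : ∀ (v : Fin 2 → ℂ) (s : ℂ),
      ∑ B' : Fin 2, Function.update v A' s B' * ρ B'
        = (∑ B' : Fin 2, v B' * ρ B') + (s - v A') * ρ A' := by
    intro v s
    fin_cases A' <;>
      simp [Fin.sum_univ_two, Function.update_apply] <;> ring
  set Θ : ℂ × ℂ → ℂ := fun p =>
    f (![Complex.I * (∑ B' : Fin 2, x 0 B' * ρ B') + p.1,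
         Complex.I * (∑ B' : Fin 2, x 1 B' * ρ B') + p.2], ρ) with hΘdef
  have hΘ : Differentiable ℂ Θ := by
    refine hf.comp (Differentiable.prodMk ?_ (differentiable_const ρ))
    have : Differentiable ℂ (fun p : ℂ × ℂ => fun i : Fin 2 =>
        (![Complex.I * (∑ B' : Fin 2, x 0 B' * ρ B') + p.1,
           Complex.I * (∑ B' : Fin 2, x 1 B' * ρ B') + p.2] : Fin 2 → ℂ) i) := by
      rw [differentiable_pi]
      intro i
      fin_cases i
      · simpa using (differentiable_const
          (Complex.I * (∑ B' : Fin 2, x 0 B' * ρ B'))).add differentiable_fst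
      · simpa using (differentiable_const
          (Complex.I * (∑ B' : Fin 2, x 1 B' * ρ B'))).add differentiable_snd
    exact this
  -- the function under dX, rewritten through Θ
  have hgx0 : ∀ (π' : Fin 2 → ℂ) (s : ℂ),
      gField f ρ (Function.update x 0 (Function.update (x 0) A' s)) π'
        = Θ (π' 0 + Complex.I * ρ A' * (s - x 0 A'), π' 1) := by
    intro π' s
    have harg : (fun A : Fin 2 => Complex.I *
          (∑ B' : Fin 2, Function.update x 0 (Function.update (x 0) A' s) A B' * ρ B') + π' A)
        = ![Complex.I * (∑ B' : Fin 2, x 0 B' * ρ B')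
              + (π' 0 + Complex.I * ρ A' * (s - x 0 A')),
            Complex.I * (∑ B' : Fin 2, x 1 B' * ρ B') + π' 1] := by
      funext A
      fin_cases A
      · simp only [Fin.zero_eta, Fin.isValue, Matrix.cons_val_zero, Function.update_self]
        rw [hsum]; ring
      · simp only [Fin.mk_one, Fin.isValue, Matrix.cons_val_one, Matrix.head_cons,
          Matrix.cons_val_fin_one]
        rw [Function.update_of_ne (by decide)]
    show f ((fun A : Fin 2 => Complex.I *
          (∑ B' : Fin 2, Function.update x 0 (Function.update (x 0) A' s) A B' * ρ B') + π' A), ρ)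
      = f (![Complex.I * (∑ B' : Fin 2, x 0 B' * ρ B')
              + (π' 0 + Complex.I * ρ A' * (s - x 0 A')),
            Complex.I * (∑ B' : Fin 2, x 1 B' * ρ B') + π' 1], ρ)
    rw [harg]
  have hgx1 : ∀ (π' : Fin 2 → ℂ) (s : ℂ),
      gField f ρ (Function.update x 1 (Function.update (x 1) A' s)) π'
        = Θ (π' 0, π' 1 + Complex.I * ρ A' * (s - x 1 A')) := by
    intro π' s
    have harg : (fun A : Fin 2 => Complex.I *
          (∑ B' : Fin 2, Function.update x 1 (Function.update (x 1) A' s) A B' * ρ B') + π' A)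
        = ![Complex.I * (∑ B' : Fin 2, x 0 B' * ρ B') + π' 0,
            Complex.I * (∑ B' : Fin 2, x 1 B' * ρ B')
              + (π' 1 + Complex.I * ρ A' * (s - x 1 A'))] := by
      funext A
      fin_cases A
      · simp only [Fin.zero_eta, Fin.isValue, Matrix.cons_val_zero]
        rw [Function.update_of_ne (by decide)]
      · simp only [Fin.mk_one, Fin.isValue, Matrix.cons_val_one, Matrix.head_cons,
          Function.update_self, Matrix.cons_val_fin_one]
        rw [hsum]; ring
    show f ((fun A : Fin 2 => Complex.I *
          (∑ B' : Fin 2, Function.update x 1 (Function.update (x 1) A' s) A B' * ρ B') + π' A), ρ)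
      = f (![Complex.I * (∑ B' : Fin 2, x 0 B' * ρ B') + π' 0,
            Complex.I * (∑ B' : Fin 2, x 1 B' * ρ B')
              + (π' 1 + Complex.I * ρ A' * (s - x 1 A'))], ρ)
    rw [harg]
  have haff : ∀ (k c d : ℂ), HasDerivAt (fun s : ℂ => d + k * (s - c)) k c := by
    intro k c d
    simpa using (((hasDerivAt_id c).sub_const c).const_mul k).const_add d
  -- formulas for the x-derivatives
  have hB0 : ∀ π' : Fin 2 → ℂ, dX 0 A' (gField f ρ) x π'
      = Complex.I * ρ A' * deriv (fun s => Θ (s, π' 1)) (π' 0) := by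
    intro π'
    have hfun : (fun s => gField f ρ (Function.update x 0 (Function.update (x 0) A' s)) π')
        = fun s => Θ (π' 0 + Complex.I * ρ A' * (s - x 0 A'), π' 1) :=
      funext fun s => hgx0 π' s
    have hφ : HasDerivAt (fun s => Θ (s, π' 1)) (deriv (fun s => Θ (s, π' 1)) (π' 0))
        (π' 0 + Complex.I * ρ A' * (x 0 A' - x 0 A')) := by
      have e : π' 0 + Complex.I * ρ A' * (x 0 A' - x 0 A') = π' 0 := by ring
      rw [e]
      exact ((hΘ.comp (differentiable_id.prodMk (differentiable_const (π' 1)))) (π' 0)).hasDerivAt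
    have hcomp : HasDerivAt (fun s => Θ (π' 0 + Complex.I * ρ A' * (s - x 0 A'), π' 1))
        (deriv (fun s => Θ (s, π' 1)) (π' 0) * (Complex.I * ρ A')) (x 0 A') :=
      by have := hφ.comp (x 0 A') (haff (Complex.I * ρ A') (x 0 A') (π' 0)); exact this
    show deriv (fun s => gField f ρ (Function.update x 0 (Function.update (x 0) A' s)) π')
        (x 0 A') = _
    rw [hfun, hcomp.deriv]
    ring
  have hB1 : ∀ π' : Fin 2 → ℂ, dX 1 A' (gField f ρ) x π'
      = Complex.I * ρ A' * deriv (fun t => Θ (π' 0, t)) (π' 1) := by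
    intro π'
    have hfun : (fun s => gField f ρ (Function.update x 1 (Function.update (x 1) A' s)) π')
        = fun s => Θ (π' 0, π' 1 + Complex.I * ρ A' * (s - x 1 A')) :=
      funext fun s => hgx1 π' s
    have hφ : HasDerivAt (fun t => Θ (π' 0, t)) (deriv (fun t => Θ (π' 0, t)) (π' 1))
        (π' 1 + Complex.I * ρ A' * (x 1 A' - x 1 A')) := by
      have e : π' 1 + Complex.I * ρ A' * (x 1 A' - x 1 A') = π' 1 := by ring
      rw [e]
      exact ((hΘ.comp ((differentiable_const (π' 0)).prodMk differentiable_id)) (π' 1)).hasDerivAt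
    have hcomp : HasDerivAt (fun s => Θ (π' 0, π' 1 + Complex.I * ρ A' * (s - x 1 A')))
        (deriv (fun t => Θ (π' 0, t)) (π' 1) * (Complex.I * ρ A')) (x 1 A') :=
      by have := hφ.comp (x 1 A') (haff (Complex.I * ρ A') (x 1 A') (π' 1)); exact this
    show deriv (fun s => gField f ρ (Function.update x 1 (Function.update (x 1) A' s)) π')
        (x 1 A') = _
    rw [hfun, hcomp.deriv]
    ring
  -- the two mixed derivatives
  have hT01 : dPi 1 (dX 0 A' (gField f ρ)) x π
      = Complex.I * ρ A' * deriv (fun u => deriv (fun s => Θ (s, u)) (π 0)) (π 1) := by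
    show deriv (fun u => dX 0 A' (gField f ρ) x (Function.update π 1 u)) (π 1) = _
    have hfun : (fun u => dX 0 A' (gField f ρ) x (Function.update π 1 u))
        = fun u => Complex.I * ρ A' * deriv (fun s => Θ (s, u)) (π 0) := by
      funext u
      rw [hB0 (Function.update π 1 u), Function.update_self,
        Function.update_of_ne (by decide)]
    rw [hfun, deriv_const_mul_field]
  have hT10 : dPi 0 (dX 1 A' (gField f ρ)) x π
      = Complex.I * ρ A' * deriv (fun u => deriv (fun t => Θ (u, t)) (π 1)) (π 0) := by
    show deriv (fun u => dX 1 A' (gField f ρ) x (Function.update π 0 u)) (π 0) = _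
    have hfun : (fun u => dX 1 A' (gField f ρ) x (Function.update π 0 u))
        = fun u => Complex.I * ρ A' * deriv (fun t => Θ (u, t)) (π 1) := by
      funext u
      rw [hB1 (Function.update π 0 u), Function.update_self,
        Function.update_of_ne (by decide)]
    rw [hfun, deriv_const_mul_field]
  have heps : ∀ T : Fin 2 → Fin 2 → ℂ,
      ∑ A : Fin 2, ∑ B : Fin 2, eps A B * T A B = T 0 1 - T 1 0 := by
    intro T
    simp [Fin.sum_univ_two, eps]
    ring
  rw [heps (fun A B => dPi B (dX A A' (gField f ρ)) x π)]
  rw [hT01, hT10, clairaut_cc Θ hΘ (π 0) (π 1)]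
  ring
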